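/- Let X ⊆ ℝⁿ, let f, f̂ : ℝⁿ → ℝⁿ be Lipschitz on X with constants K_f and K_f̂ respectively, and let V : ℝⁿ → ℝ be continuously differentiable with ‖∇V(x)‖ ≤ ν for all x ∈ X. Let Y ⊆ X be a finite set such that for every z ∈ X there exists y ∈ Y with ‖z − y‖ < δ, and suppose ‖f(y) − f̂(y)‖ ≤ α for every y ∈ Y. Let 0 < c₁ < c₂ and β > ν·((K_f + K_f̂)·δ + α) > 0 be such that ⟨∇V(x), f̂(x)⟩ ≤ −β for every x ∈ X with c₁ ≤ V(x) ≤ c₂. Write Ω_c = {x ∈ X : V(x) ≤ c}. Suppose Ω_{c₂} is compact and contained in the interior of X, and suppose there is a set O with Ω_{c₁} ⊆ O ⊆ X such that every solution of ẋ = f(x) starting in O remains in O for all t ≥ 0 and converges to the origin as t → ∞. Then every solution x(·) of ẋ = f(x) with x(0) ∈ Ω_{c₂} satisfies x(t) ∈ Ω_{c₂} for all t ≥ 0 and x(t) → 0 as t → ∞; that is, Ω_{c₂} is a region of attraction for ẋ = f(x). -/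

import Mathlib

open Filter Topology

theorem sublevel_set_is_region_of_attraction {n : ℕ}
    (X : Set (EuclideanSpace ℝ (Fin n)))
    (f fhat : EuclideanSpace ℝ (Fin n) → EuclideanSpace ℝ (Fin n))
    (Kf Kfhat ν δ α β c₁ c₂ : ℝ)
    (hf : ∀ a ∈ X, ∀ b ∈ X, ‖f a - f b‖ ≤ Kf * ‖a - b‖)
    (hfhat : ∀ a ∈ X, ∀ b ∈ X, ‖fhat a - fhat b‖ ≤ Kfhat * ‖a - b‖)
    (V : EuclideanSpace ℝ (Fin n) → ℝ) (hV : ContDiff ℝ 1 V)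
    (hgrad : ∀ x ∈ X, ‖gradient V x‖ ≤ ν)
    (Y : Finset (EuclideanSpace ℝ (Fin n))) (hYX : ↑Y ⊆ X)
    (hcover : ∀ z ∈ X, ∃ y ∈ Y, ‖z - y‖ < δ)
    (herr : ∀ y ∈ Y, ‖f y - fhat y‖ ≤ α)
    (hc₁ : 0 < c₁) (hc₁₂ : c₁ < c₂)
    (hβpos : 0 < ν * ((Kf + Kfhat) * δ + α))
    (hβ : ν * ((Kf + Kfhat) * δ + α) < β)
    (hVdot : ∀ x ∈ X, c₁ ≤ V x → V x ≤ c₂ → inner ℝ (gradient V x) (fhat x) ≤ -β)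
    (hcompact : IsCompact {x ∈ X | V x ≤ c₂})
    (hinterior : {x ∈ X | V x ≤ c₂} ⊆ interior X)
    (O : Set (EuclideanSpace ℝ (Fin n)))
    (hO₁ : {x ∈ X | V x ≤ c₁} ⊆ O) (hO₂ : O ⊆ X)
    (hOattr : ∀ sol : ℝ → EuclideanSpace ℝ (Fin n),
      (∀ t ≥ (0 : ℝ), HasDerivAt sol (f (sol t)) t) → sol 0 ∈ O →
      (∀ t ≥ (0 : ℝ), sol t ∈ O) ∧ Tendsto sol atTop (𝓝 0)) :
    ∀ sol : ℝ → EuclideanSpace ℝ (Fin n),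
      (∀ t ≥ (0 : ℝ), HasDerivAt sol (f (sol t)) t) →
      sol 0 ∈ {x ∈ X | V x ≤ c₂} →
      (∀ t ≥ (0 : ℝ), sol t ∈ {x ∈ X | V x ≤ c₂}) ∧ Tendsto sol atTop (𝓝 0) := by
  intro sol hsol hsol0
  by_cases hsub : Subsingleton (EuclideanSpace ℝ (Fin n))
  · constructor
    · intro t _
      have : sol t = sol 0 := Subsingleton.elim _ _
      rw [this]; exact hsol0
    · have : sol = fun _ => 0 := funext fun t => Subsingleton.elim _ _
      rw [this]; exact tendsto_const_nhds
  haveI : Nontrivial (EuclideanSpace ℝ (Fin n)) := not_subsingleton_iff_nontrivial.mp hsub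
  obtain ⟨hx0X, hx0V⟩ := hsol0
  -- basic positivity facts
  have hνnn : 0 ≤ ν := le_trans (norm_nonneg _) (hgrad _ hx0X)
  have hδ : 0 < δ := by
    obtain ⟨y, _, hy⟩ := hcover _ hx0X
    exact lt_of_le_of_lt (norm_nonneg _) hy
  -- two distinct points of X, hence nonnegative Lipschitz constants
  have hI : sol 0 ∈ interior X := hinterior ⟨hx0X, hx0V⟩
  obtain ⟨r, hr, hball⟩ := Metric.isOpen_iff.mp isOpen_interior (sol 0) hI
  obtain ⟨v, hv⟩ := exists_ne (0 : EuclideanSpace ℝ (Fin n))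
  have hvn : 0 < ‖v‖ := norm_pos_iff.mpr hv
  set q : EuclideanSpace ℝ (Fin n) := sol 0 + (r / (2 * ‖v‖)) • v with hq
  have hqp : ‖q - sol 0‖ = r / 2 := by
    rw [hq, add_sub_cancel_left, norm_smul, Real.norm_eq_abs,
      abs_of_pos (by positivity)]
    field_simp
  have hqX : q ∈ X := interior_subset (hball (by
    rw [Metric.mem_ball, dist_eq_norm, hqp]; linarith))
  have hpq : 0 < ‖sol 0 - q‖ := by rw [norm_sub_rev, hqp]; linarith
  have hKf : 0 ≤ Kf := by
    have h1 := hf _ hx0X q hqX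
    nlinarith [norm_nonneg (f (sol 0) - f q)]
  have hKfhat : 0 ≤ Kfhat := by
    have h1 := hfhat _ hx0X q hqX
    nlinarith [norm_nonneg (fhat (sol 0) - fhat q)]
  set ε : ℝ := β - ν * ((Kf + Kfhat) * δ + α) with hεdef
  have hε : 0 < ε := by rw [hεdef]; linarith
  -- the error bound
  have hbound : ∀ x ∈ X, ‖f x - fhat x‖ ≤ (Kf + Kfhat) * δ + α := by
    intro x hx
    obtain ⟨y, hyY, hxy⟩ := hcover x hx
    have hyX : y ∈ X := hYX hyY
    have h1 := hf x hx y hyX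
    have h2 := hfhat y hyX x hx
    have h3 := herr y hyY
    have h4 : ‖f x - fhat x‖ ≤ ‖f x - f y‖ + ‖f y - fhat y‖ + ‖fhat y - fhat x‖ := by
      have := norm_add₃_le (a := f x - f y) (b := f y - fhat y) (c := fhat y - fhat x)
      simpa using this
    have h5 : ‖y - x‖ = ‖x - y‖ := norm_sub_rev _ _
    rw [h5] at h2
    nlinarith [norm_nonneg (x - y)]
  -- the key derivative estimate on the shell
  have hkey : ∀ x ∈ X, c₁ ≤ V x → V x ≤ c₂ →
      (inner ℝ (gradient V x) (f x) : ℝ) ≤ -ε := by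
    intro x hx h1 h2
    have hd := hVdot x hx h1 h2
    have hsplit : (inner ℝ (gradient V x) (f x) : ℝ) =
        inner ℝ (gradient V x) (fhat x) + inner ℝ (gradient V x) (f x - fhat x) := by
      rw [← inner_add_right]
      congr 1
      abel
    have hcs : (inner ℝ (gradient V x) (f x - fhat x) : ℝ) ≤
        ‖gradient V x‖ * ‖f x - fhat x‖ := real_inner_le_norm _ _
    have hmul : ‖gradient V x‖ * ‖f x - fhat x‖ ≤ ν * ((Kf + Kfhat) * δ + α) :=
      mul_le_mul (hgrad x hx) (hbound x hx) (norm_nonneg _) hνnn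
    rw [hsplit, hεdef]
    linarith
  -- derivative of V along the solution
  have hW : ∀ t : ℝ, 0 ≤ t → HasDerivAt (fun s => V (sol s))
      (inner ℝ (gradient V (sol t)) (f (sol t))) t := by
    intro t ht
    have hdV : HasGradientAt V (gradient V (sol t)) (sol t) :=
      ((hV.differentiable one_ne_zero) (sol t)).hasGradientAt
    have := hdV.hasFDerivAt.comp_hasDerivAt t (hsol t ht)
    simpa [InnerProductSpace.toDual_apply_apply, Function.comp_def] using this
  -- no-escape lemma on intervals staying in X
  have hstay : ∀ a b : ℝ, 0 ≤ a → (∀ s ∈ Set.Icc a b, sol s ∈ X) →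
      V (sol a) ≤ c₂ → ∀ s ∈ Set.Icc a b, V (sol s) ≤ c₂ := by
    intro a b ha hX hVa
    have := image_le_of_deriv_right_lt_deriv_boundary
      (f := fun s => V (sol s))
      (f' := fun s => inner ℝ (gradient V (sol s)) (f (sol s)))
      (B := fun _ => c₂) (B' := fun _ => 0) (a := a) (b := b)
      ?_ ?_ hVa (fun _ => hasDerivAt_const _ _) ?_
    · exact fun s hs => this hs
    · intro s hs
      exact ((hW s (le_trans ha hs.1)).continuousAt).continuousWithinAt
    · intro s hs
      exact (hW s (le_trans ha hs.1)).hasDerivWithinAt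
    · intro s hs hV2
      have hV2' : V (sol s) = c₂ := hV2
      have hk := hkey (sol s) (hX s ⟨hs.1, le_of_lt hs.2⟩) (by rw [hV2']; linarith)
        (le_of_eq hV2')
      show (inner ℝ (gradient V (sol s)) (f (sol s)) : ℝ) < 0
      linarith
  -- forward invariance of the sublevel set
  have hinv : ∀ t : ℝ, 0 ≤ t → sol t ∈ X ∧ V (sol t) ≤ c₂ := by
    by_contra hcon
    push_neg at hcon
    obtain ⟨b₀, hb₀, hb₀bad⟩ := hcon
    set A : Set ℝ := {b | b ∈ Set.Icc 0 b₀ ∧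
      ∀ s ∈ Set.Icc (0:ℝ) b, sol s ∈ X ∧ V (sol s) ≤ c₂} with hA
    have h0A : (0:ℝ) ∈ A := by
      refine ⟨⟨le_refl _, hb₀⟩, ?_⟩
      intro s hs
      have : s = 0 := le_antisymm hs.2 hs.1
      rw [this]; exact ⟨hx0X, hx0V⟩
    have hAne : A.Nonempty := ⟨0, h0A⟩
    have hAbdd : BddAbove A := ⟨b₀, fun b hb => hb.1.2⟩
    set u := sSup A with hu
    have hu0 : 0 ≤ u := le_csSup hAbdd h0A
    have hub : u ≤ b₀ := csSup_le hAne fun b hb => hb.1.2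
    have hlt : ∀ s, 0 ≤ s → s < u → sol s ∈ X ∧ V (sol s) ≤ c₂ := by
      intro s hs hsu
      obtain ⟨b, hbA, hsb⟩ := exists_lt_of_lt_csSup hAne hsu
      exact hbA.2 s ⟨hs, le_of_lt hsb⟩
    have hPu : sol u ∈ X ∧ V (sol u) ≤ c₂ := by
      rcases eq_or_lt_of_le hu0 with h | h
      · rw [← h]; exact ⟨hx0X, hx0V⟩
      · have hcont : ContinuousWithinAt sol (Set.Ico 0 u) u :=
          ((hsol u hu0).continuousAt).continuousWithinAt
        have hne : (𝓝[Set.Ico (0:ℝ) u] u).NeBot := by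
          rw [← mem_closure_iff_nhdsWithin_neBot, closure_Ico (ne_of_lt h)]
          exact ⟨hu0, le_refl _⟩
        have hcl : IsClosed {x ∈ X | V x ≤ c₂} := hcompact.isClosed
        have hmem : sol u ∈ {x ∈ X | V x ≤ c₂} := by
          refine hcl.mem_of_tendsto hcont ?_
          filter_upwards [self_mem_nhdsWithin] with s hs
          exact hlt s hs.1 hs.2
        exact hmem
    have hub' : u < b₀ := by
      rcases eq_or_lt_of_le hub with h | h
      · exfalso
        rw [h] at hPu
        exact absurd hPu.2 (not_le.mpr (hb₀bad hPu.1))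
      · exact h
    -- extend past u
    have hIu : sol u ∈ interior X := hinterior hPu
    have hev : ∀ᶠ s in 𝓝 u, sol s ∈ interior X :=
      ((hsol u hu0).continuousAt).eventually_mem (isOpen_interior.mem_nhds hIu)
    obtain ⟨h, hh, hhs⟩ := Metric.eventually_nhds_iff.mp hev
    set b₁ := min (u + h/2) b₀ with hb₁
    have hub₁ : u < b₁ := lt_min (by linarith) hub'
    have hXb₁ : ∀ s ∈ Set.Icc u b₁, sol s ∈ X := by
      intro s hs
      have h1 : s ≤ u + h/2 := le_trans hs.2 (min_le_left _ _)
      have : dist s u < h := by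
        rw [Real.dist_eq, abs_of_nonneg (by linarith [hs.1])]
        linarith
      exact interior_subset (hhs this)
    have hVb₁ := hstay u b₁ hu0 hXb₁ hPu.2
    have hb₁A : b₁ ∈ A := by
      refine ⟨⟨by linarith, min_le_right _ _⟩, ?_⟩
      intro s hs
      rcases lt_or_ge s u with h' | h'
      · exact hlt s hs.1 h'
      · exact ⟨hXb₁ s ⟨h', hs.2⟩, hVb₁ s ⟨h', hs.2⟩⟩
    have := le_csSup hAbdd hb₁A
    rw [← hu] at this
    linarith
  -- reaching the inner sublevel set in finite time
  have hreach : ∃ t₀ : ℝ, 0 ≤ t₀ ∧ V (sol t₀) ≤ c₁ := by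
    by_contra hcon
    push_neg at hcon
    obtain ⟨T, hT0, hεT⟩ : ∃ T : ℝ, 0 < T ∧ ε * T = c₂ - c₁ + ε := by
      refine ⟨(c₂ - c₁) / ε + 1, ?_, ?_⟩
      · have h1 : 0 ≤ (c₂ - c₁) / ε := div_nonneg (by linarith) (le_of_lt hε)
        linarith
      · rw [mul_add, mul_one, mul_div_cancel₀ _ (ne_of_gt hε)]
    set g : ℝ → ℝ := fun t => V (sol t) + ε * t with hg
    have hg' : ∀ t : ℝ, 0 ≤ t → HasDerivAt g
        (inner ℝ (gradient V (sol t)) (f (sol t)) + ε) t := by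
      intro t ht
      exact (hW t ht).add (by simpa using (hasDerivAt_id t).const_mul ε)
    have hmono : AntitoneOn g (Set.Icc 0 T) := by
      apply antitoneOn_of_deriv_nonpos (convex_Icc 0 T)
      · intro t ht
        exact ((hg' t ht.1).continuousAt).continuousWithinAt
      · rw [interior_Icc]
        intro t ht
        exact ((hg' t (le_of_lt ht.1)).differentiableAt).differentiableWithinAt
      · rw [interior_Icc]
        intro t ht
        rw [(hg' t (le_of_lt ht.1)).deriv]
        have h1 := hinv t (le_of_lt ht.1)
        have h2 := hcon t (le_of_lt ht.1)
        have := hkey (sol t) h1.1 (le_of_lt h2) h1.2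
        linarith
    have hgT : g T ≤ g 0 := hmono ⟨le_refl _, le_of_lt hT0⟩
      ⟨le_of_lt hT0, le_refl _⟩ (le_of_lt hT0)
    have hgT' : V (sol T) + ε * T ≤ V (sol 0) + ε * 0 := hgT
    have := hcon T (le_of_lt hT0)
    rw [hεT] at hgT'
    have h0 : ε * 0 = 0 := mul_zero ε
    rw [h0] at hgT'
    linarith
  obtain ⟨t₀, ht₀, hVt₀⟩ := hreach
  have hO : sol t₀ ∈ O := hO₁ ⟨(hinv t₀ ht₀).1, hVt₀⟩
  -- shifted solution
  set sol2 : ℝ → EuclideanSpace ℝ (Fin n) := fun s => sol (t₀ + s) with hsol2def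
  have hsol2 : ∀ t ≥ (0:ℝ), HasDerivAt sol2 (f (sol2 t)) t := by
    intro t ht
    have h1 : HasDerivAt (fun s : ℝ => t₀ + s) 1 t := by
      simpa using (hasDerivAt_id t).const_add t₀
    have h2 := hsol (t₀ + t) (by linarith)
    have := h2.scomp t h1
    rw [one_smul] at this; exact this
  obtain ⟨_, htend⟩ := hOattr sol2 hsol2 (by simpa [hsol2def] using hO)
  constructor
  · exact fun t ht => hinv t ht
  · have hshift : Tendsto (fun t : ℝ => t - t₀) atTop atTop :=
      tendsto_atTop_add_const_right atTop (-t₀) tendsto_id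
    have := htend.comp hshift
    have heq : (sol2 ∘ fun t : ℝ => t - t₀) = sol := by
      funext t
      simp [hsol2def]
    rwa [heq] at this
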